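/- Let α ∈ [0,1] and suppose β₁, β₂, β₃ ∈ ℝ satisfy: α·β₁ = (1−α)(3/8 − β₁) + α(β₂ − β₁); (1−α)(β₂ − 3/8) + α(β₂ − β₁) = (1−α)(5/8 − β₂) + α(β₃ − β₂); and (1−α)(β₃ − 5/8) + α(β₃ − β₂) = (1−α)(7/8 − β₃) + α(1 − β₃). Then 4·β₁ = 1/2 + 2(α² − 2)/((α−1)·α·(4+α) − 4). -/

import Mathlib

theorem stmt_6 (α β₁ β₂ β₃ : ℝ) (hα0 : 0 ≤ α) (hα1 : α ≤ 1)
    (h1 : α * β₁ = (1 - α) * (3/8 - β₁) + α * (β₂ - β₁))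
    (h2 : (1 - α) * (β₂ - 3/8) + α * (β₂ - β₁)
        = (1 - α) * (5/8 - β₂) + α * (β₃ - β₂))
    (h3 : (1 - α) * (β₃ - 5/8) + α * (β₃ - β₂)
        = (1 - α) * (7/8 - β₃) + α * (1 - β₃)) :
    4 * β₁ = 1/2 + 2 * (α^2 - 2) / ((α - 1) * α * (4 + α) - 4) := by
  have hD : (α - 1) * α * (4 + α) - 4 ≠ 0 := by nlinarith [sq_nonneg α, mul_nonneg hα0 hα0]
  rw [add_div' _ _ _ hD, eq_div_iff hD]
  linear_combination (1/2:ℝ) * ((8*α^2 - 32) * h1 - (16*α) * h2 - (8*α^2) * h3)
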